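/- Let m be an integer and k a natural number, and let A = IDD(K^k_∞, m, 0), i.e., the complex vector space with basis {e_i : i ≥ k} and product e_i ⋄ e_j = c_m(i)·e_{i+j−m} if i+j−m ≥ k and 0 otherwise. Define a second bilinear multiplication * on A by e_i * e_j = (c_m(i)·c_m(j)/c_m(i+j−m))·e_{i+j−m} whenever i+j−m ≥ k and c_m(i+j−m) ≠ 0, and e_i * e_j = 0 otherwise. Then A is a conservative algebra with respect to *: for all a, b, x, y ∈ A, b⋄(a⋄(x⋄y)) − b⋄((a⋄x)⋄y) − b⋄(x⋄(a⋄y)) − a⋄((b⋄x)⋄y) + (a⋄(b⋄x))⋄y + (b⋄x)⋄(a⋄y) − a⋄(x⋄(b⋄y)) + (a⋄x)⋄(b⋄y) + x⋄(a⋄(b⋄y)) = −(a*b)⋄(x⋄y) + ((a*b)⋄x)⋄y + x⋄((a*b)⋄y). -/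

import Mathlib

/-- The structure constant `c_m(i)`: the falling factorial `i(i-1)⋯(i-m+1)` when `m ≥ 0`,
and `1/((i+1)(i+2)⋯(i-m))` when `m < 0`. -/
noncomputable def cc (m : ℤ) (i : ℕ) : ℂ :=
  if 0 ≤ m then ∏ t ∈ Finset.range m.toNat, ((i : ℂ) - (t : ℂ))
  else (∏ t ∈ Finset.range (-m).toNat, ((i : ℂ) + (t : ℂ) + 1))⁻¹

/-- The index set `{i : ℕ | k ≤ i ≤ N}` (with `N ∈ ℕ ∪ {∞}`). -/
abbrev Idx (k : ℕ) (N : ℕ∞) := {i : ℕ // k ≤ i ∧ (i : ℕ∞) ≤ N}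

/-- The underlying vector space of `IDD(K^k_N, m₁, m₂)`: the complex vector space with
basis `{e_i : k ≤ i ≤ N}`. -/
abbrev IDD (k : ℕ) (N : ℕ∞) := Idx k N →₀ ℂ

/- The multiplication of `IDD(K^k_N, m₁, m₂)`:
`e_i ⋄ e_j = c_{m₁}(i) c_{m₂}(j) e_{i+j-m₁-m₂}` when `k ≤ i+j-m₁-m₂ ≤ N`, and `0` otherwise,
extended bilinearly. -/
open Classical in
noncomputable def dmul (k : ℕ) (N : ℕ∞) (m₁ m₂ : ℤ) (x y : IDD k N) : IDD k N :=
  x.sum fun i xi => y.sum fun j yj =>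
    if h : ∃ p : Idx k N, (p.1 : ℤ) = (i.1 : ℤ) + (j.1 : ℤ) - (m₁ + m₂) then
      Finsupp.single h.choose (xi * yj * cc m₁ i.1 * cc m₂ j.1)
    else 0

/- The second multiplication `*` on `IDD(K^k_∞, m, 0)`:
`e_i * e_j = (c_m(i)·c_m(j)/c_m(i+j−m))·e_{i+j−m}` whenever `i+j−m ≥ k` and
`c_m(i+j−m) ≠ 0`, and `e_i * e_j = 0` otherwise, extended bilinearly. -/
open Classical in
noncomputable def smul2 (k : ℕ) (m : ℤ) (x y : IDD k ⊤) : IDD k ⊤ :=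
  x.sum fun i xi => y.sum fun j yj =>
    if h : ∃ p : Idx k ⊤, (p.1 : ℤ) = (i.1 : ℤ) + (j.1 : ℤ) - m ∧ cc m p.1 ≠ 0 then
      Finsupp.single h.choose (xi * yj * (cc m i.1 * cc m j.1 / cc m h.choose.1))
    else 0

set_option maxHeartbeats 2000000

lemma dmul_zero_left (k N m₁ m₂) (y : IDD k N) : dmul k N m₁ m₂ 0 y = 0 :=
  Finsupp.sum_zero_index

lemma dmul_zero_right (k N m₁ m₂) (x : IDD k N) : dmul k N m₁ m₂ x 0 = 0 := by
  simp only [dmul, Finsupp.sum_zero_index, Finsupp.sum_fun_zero]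

lemma dmul_add_left (k N m₁ m₂) (x₁ x₂ y : IDD k N) :
    dmul k N m₁ m₂ (x₁ + x₂) y = dmul k N m₁ m₂ x₁ y + dmul k N m₁ m₂ x₂ y := by
  unfold dmul
  apply Finsupp.sum_add_index'
  · intro i
    simp only [zero_mul, Finsupp.single_zero, dite_eq_ite, ite_self, Finsupp.sum_fun_zero]
  · intro i b₁ b₂
    rw [← Finsupp.sum_add]
    apply Finsupp.sum_congr
    intro j _
    split <;> simp [add_mul, Finsupp.single_add]

lemma dmul_add_right (k N m₁ m₂) (x y₁ y₂ : IDD k N) :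
    dmul k N m₁ m₂ x (y₁ + y₂) = dmul k N m₁ m₂ x y₁ + dmul k N m₁ m₂ x y₂ := by
  unfold dmul
  rw [← Finsupp.sum_add]
  apply Finsupp.sum_congr
  intro i _
  apply Finsupp.sum_add_index'
  · intro j
    split <;> simp
  · intro j b₁ b₂
    split <;> simp [mul_add, add_mul, Finsupp.single_add]

lemma smul2_zero_left (k m) (y : IDD k ⊤) : smul2 k m 0 y = 0 :=
  Finsupp.sum_zero_index

lemma smul2_zero_right (k m) (x : IDD k ⊤) : smul2 k m x 0 = 0 := by
  simp only [smul2, Finsupp.sum_zero_index, Finsupp.sum_fun_zero]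

lemma smul2_add_left (k m) (x₁ x₂ y : IDD k ⊤) :
    smul2 k m (x₁ + x₂) y = smul2 k m x₁ y + smul2 k m x₂ y := by
  unfold smul2
  apply Finsupp.sum_add_index'
  · intro i
    simp only [zero_mul, Finsupp.single_zero, dite_eq_ite, ite_self, Finsupp.sum_fun_zero]
  · intro i b₁ b₂
    rw [← Finsupp.sum_add]
    apply Finsupp.sum_congr
    intro j _
    split <;> simp [add_mul, Finsupp.single_add]

lemma smul2_add_right (k m) (x y₁ y₂ : IDD k ⊤) :
    smul2 k m x (y₁ + y₂) = smul2 k m x y₁ + smul2 k m x y₂ := by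
  unfold smul2
  rw [← Finsupp.sum_add]
  apply Finsupp.sum_congr
  intro i _
  apply Finsupp.sum_add_index'
  · intro j
    split <;> simp
  · intro j b₁ b₂
    split <;> simp [mul_add, add_mul, Finsupp.single_add]
noncomputable def sgl (k : ℕ) (z : ℤ) (C : ℂ) : IDD k ⊤ :=
  if h : (k:ℤ) ≤ z then Finsupp.single ⟨z.toNat, by omega, le_top⟩ C else 0

lemma sgl_single (k : ℕ) (i : Idx k ⊤) (c : ℂ) : Finsupp.single i c = sgl k i.1 c := by
  unfold sgl
  rw [dif_pos (by exact_mod_cast i.2.1)]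
  have h2 : (⟨((i.1 : ℤ)).toNat, by omega, le_top⟩ : Idx k ⊤) = i := Subtype.ext (by simp)
  rw [h2]

lemma sgl_add (k : ℕ) (z : ℤ) (C D : ℂ) : sgl k z C + sgl k z D = sgl k z (C + D) := by
  unfold sgl; split <;> simp [Finsupp.single_add]

lemma sgl_neg (k : ℕ) (z : ℤ) (C : ℂ) : -sgl k z C = sgl k z (-C) := by
  unfold sgl; split <;> simp [Finsupp.single_neg]

lemma sgl_sub (k : ℕ) (z : ℤ) (C D : ℂ) : sgl k z C - sgl k z D = sgl k z (C - D) := by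
  rw [sub_eq_add_neg, sgl_neg, sgl_add, sub_eq_add_neg]

lemma cc_zero (n : ℕ) : cc 0 n = 1 := by simp [cc]

lemma dmul_ite_left (k N m₁ m₂) (P : Prop) [Decidable P] (u v : IDD k N) :
    dmul k N m₁ m₂ (if P then u else 0) v = if P then dmul k N m₁ m₂ u v else 0 := by
  split <;> simp [dmul_zero_left]

lemma dmul_ite_right (k N m₁ m₂) (P : Prop) [Decidable P] (u v : IDD k N) :
    dmul k N m₁ m₂ u (if P then v else 0) = if P then dmul k N m₁ m₂ u v else 0 := by
  split <;> simp [dmul_zero_right]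

lemma smul2_ite_left (k m) (P : Prop) [Decidable P] (u v : IDD k ⊤) :
    smul2 k m (if P then u else 0) v = if P then smul2 k m u v else 0 := by
  split <;> simp [smul2_zero_left]

lemma smul2_ite_right (k m) (P : Prop) [Decidable P] (u v : IDD k ⊤) :
    smul2 k m u (if P then v else 0) = if P then smul2 k m u v else 0 := by
  split <;> simp [smul2_zero_right]

lemma dmul_single_single (k : ℕ) (m : ℤ) (z w : ℤ) (hz : (k:ℤ) ≤ z) (hw : (k:ℤ) ≤ w)
    (C D : ℂ) :
    dmul k ⊤ m 0 (Finsupp.single ⟨z.toNat, by omega, le_top⟩ C)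
        (Finsupp.single ⟨w.toNat, by omega, le_top⟩ D) =
      sgl k (z + w - m) (C * D * cc m z.toNat) := by
  unfold dmul
  rw [Finsupp.sum_single_index, Finsupp.sum_single_index]
  · by_cases hs : (k:ℤ) ≤ z + w - m
    · have hex : ∃ p : Idx k ⊤, (p.1 : ℤ) = ((z.toNat : ℕ) : ℤ) + ((w.toNat : ℕ) : ℤ) - (m + 0) :=
        ⟨⟨(z + w - m).toNat, by omega, le_top⟩, by push_cast; omega⟩
      rw [dif_pos hex]
      unfold sgl
      rw [dif_pos hs]
      have hch : hex.choose = ⟨(z + w - m).toNat, by omega, le_top⟩ := by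
        apply Subtype.ext
        show (hex.choose.1 : ℕ) = (z + w - m).toNat
        have := hex.choose_spec
        omega
      rw [hch, cc_zero, mul_one]
    · have hnex : ¬ ∃ p : Idx k ⊤, (p.1 : ℤ) = ((z.toNat : ℕ) : ℤ) + ((w.toNat : ℕ) : ℤ) - (m + 0) := by
        rintro ⟨p, hp⟩
        have := p.2.1
        omega
      rw [dif_neg hnex]
      unfold sgl
      rw [dif_neg hs]
  · simp
  · simp only [zero_mul, Finsupp.single_zero, dite_eq_ite, ite_self, Finsupp.sum_fun_zero]

lemma dmul_sgl (k : ℕ) (m : ℤ) (z w : ℤ) (C D : ℂ) :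
    dmul k ⊤ m 0 (sgl k z C) (sgl k w D) =
      if (k:ℤ) ≤ z ∧ (k:ℤ) ≤ w then sgl k (z + w - m) (C * D * cc m z.toNat) else 0 := by
  unfold sgl
  by_cases hz : (k:ℤ) ≤ z
  · by_cases hw : (k:ℤ) ≤ w
    · rw [dif_pos hz, dif_pos hw, if_pos ⟨hz, hw⟩, dmul_single_single k m z w hz hw]
      rfl
    · rw [dif_neg hw, if_neg (by tauto), dmul_zero_right]
  · rw [dif_neg hz, if_neg (by tauto), dmul_zero_left]
open Classical in
lemma smul2_single_single (k : ℕ) (m : ℤ) (z w : ℤ) (hz : (k:ℤ) ≤ z) (hw : (k:ℤ) ≤ w)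
    (C D : ℂ) :
    smul2 k m (Finsupp.single ⟨z.toNat, by omega, le_top⟩ C)
        (Finsupp.single ⟨w.toNat, by omega, le_top⟩ D) =
      if (k:ℤ) ≤ z + w - m ∧ cc m (z + w - m).toNat ≠ 0 then
        sgl k (z + w - m) (C * D * (cc m z.toNat * cc m w.toNat / cc m (z + w - m).toNat))
      else 0 := by
  unfold smul2
  rw [Finsupp.sum_single_index, Finsupp.sum_single_index]
  · by_cases hs : (k:ℤ) ≤ z + w - m ∧ cc m (z + w - m).toNat ≠ 0
    · have hex : ∃ p : Idx k ⊤, (p.1 : ℤ) = ((z.toNat : ℕ) : ℤ) + ((w.toNat : ℕ) : ℤ) - m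
          ∧ cc m p.1 ≠ 0 :=
        ⟨⟨(z + w - m).toNat, by omega, le_top⟩, ⟨by push_cast; omega, hs.2⟩⟩
      rw [dif_pos hex, if_pos hs]
      unfold sgl
      rw [dif_pos hs.1]
      have hch : hex.choose = ⟨(z + w - m).toNat, by omega, le_top⟩ := by
        apply Subtype.ext
        show (hex.choose.1 : ℕ) = (z + w - m).toNat
        have := hex.choose_spec.1
        omega
      rw [hch]
    · have hnex : ¬ ∃ p : Idx k ⊤, (p.1 : ℤ) = ((z.toNat : ℕ) : ℤ) + ((w.toNat : ℕ) : ℤ) - m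
          ∧ cc m p.1 ≠ 0 := by
        rintro ⟨p, hp, hp2⟩
        have h1 := p.2.1
        apply hs
        constructor
        · omega
        · have : p.1 = (z + w - m).toNat := by omega
          rwa [← this]
      rw [dif_neg hnex, if_neg hs]
  · simp
  · simp only [zero_mul, Finsupp.single_zero, dite_eq_ite, ite_self, Finsupp.sum_fun_zero]

open Classical in
lemma smul2_sgl (k : ℕ) (m : ℤ) (z w : ℤ) (C D : ℂ) :
    smul2 k m (sgl k z C) (sgl k w D) =
      if (k:ℤ) ≤ z ∧ (k:ℤ) ≤ w ∧ ((k:ℤ) ≤ z + w - m ∧ cc m (z + w - m).toNat ≠ 0) then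
        sgl k (z + w - m) (C * D * (cc m z.toNat * cc m w.toNat / cc m (z + w - m).toNat))
      else 0 := by
  unfold sgl
  by_cases hz : (k:ℤ) ≤ z
  · by_cases hw : (k:ℤ) ≤ w
    · rw [dif_pos hz, dif_pos hw, smul2_single_single k m z w hz hw]
      by_cases hs : (k:ℤ) ≤ z + w - m ∧ cc m (z + w - m).toNat ≠ 0
      · rw [if_pos hs, if_pos ⟨hz, hw, hs⟩]
        rfl
      · rw [if_neg hs, if_neg (by tauto)]
    · rw [dif_neg hw, if_neg (by tauto), smul2_zero_right]
  · rw [dif_neg hz, if_neg (by tauto), smul2_zero_left]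

lemma ite_sgl (k : ℕ) (P : Prop) [Decidable P] (z : ℤ) (C : ℂ) :
    (if P then sgl k z C else 0) = sgl k z (if P then C else 0) := by
  split <;> unfold sgl <;> split <;> simp
lemma cc_ne_zero_of_neg {m : ℤ} (hm : m < 0) (n : ℕ) : cc m n ≠ 0 := by
  rw [cc, if_neg (by omega)]
  apply inv_ne_zero
  rw [Finset.prod_ne_zero_iff]
  intro t _
  have : ((n : ℂ) + t + 1) = ((n + t + 1 : ℕ) : ℂ) := by push_cast; ring
  rw [this]
  exact Nat.cast_ne_zero.mpr (by omega)

lemma cc_eq_zero_iff {m : ℤ} (hm : 0 ≤ m) (n : ℕ) : cc m n = 0 ↔ (n : ℤ) < m := by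
  rw [cc, if_pos hm, Finset.prod_eq_zero_iff]
  constructor
  · rintro ⟨t, ht, h0⟩
    simp only [Finset.mem_range] at ht
    rw [sub_eq_zero] at h0
    have : n = t := by exact_mod_cast h0
    omega
  · intro h
    exact ⟨n, Finset.mem_range.mpr (by omega), by simp⟩
set_option maxHeartbeats 1000000 in
theorem stmt7_single (k : ℕ) (m : ℤ) (α β ξ η : ℕ) (ha : k ≤ α) (hb : k ≤ β)
    (hx : k ≤ ξ) (hy : k ≤ η) (c1 c2 c3 c4 : ℂ) :
    (fun a b x y =>
    dmul k ⊤ m 0 b (dmul k ⊤ m 0 a (dmul k ⊤ m 0 x y))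
      - dmul k ⊤ m 0 b (dmul k ⊤ m 0 (dmul k ⊤ m 0 a x) y)
      - dmul k ⊤ m 0 b (dmul k ⊤ m 0 x (dmul k ⊤ m 0 a y))
      - dmul k ⊤ m 0 a (dmul k ⊤ m 0 (dmul k ⊤ m 0 b x) y)
      + dmul k ⊤ m 0 (dmul k ⊤ m 0 a (dmul k ⊤ m 0 b x)) y
      + dmul k ⊤ m 0 (dmul k ⊤ m 0 b x) (dmul k ⊤ m 0 a y)
      - dmul k ⊤ m 0 a (dmul k ⊤ m 0 x (dmul k ⊤ m 0 b y))
      + dmul k ⊤ m 0 (dmul k ⊤ m 0 a x) (dmul k ⊤ m 0 b y)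
      + dmul k ⊤ m 0 x (dmul k ⊤ m 0 a (dmul k ⊤ m 0 b y)))
      (Finsupp.single ⟨α, ha, le_top⟩ c1) (Finsupp.single ⟨β, hb, le_top⟩ c2)
      (Finsupp.single ⟨ξ, hx, le_top⟩ c3) (Finsupp.single ⟨η, hy, le_top⟩ c4)
    = (fun a b x y =>
      - dmul k ⊤ m 0 (smul2 k m a b) (dmul k ⊤ m 0 x y)
      + dmul k ⊤ m 0 (dmul k ⊤ m 0 (smul2 k m a b) x) y
      + dmul k ⊤ m 0 x (dmul k ⊤ m 0 (smul2 k m a b) y))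
      (Finsupp.single ⟨α, ha, le_top⟩ c1) (Finsupp.single ⟨β, hb, le_top⟩ c2)
      (Finsupp.single ⟨ξ, hx, le_top⟩ c3) (Finsupp.single ⟨η, hy, le_top⟩ c4) := by
  simp only
  rw [sgl_single, sgl_single, sgl_single, sgl_single]
  simp only [dmul_ite_left, dmul_ite_right, smul2_ite_left, smul2_ite_right,
    dmul_sgl, smul2_sgl, Int.toNat_natCast]
  have Ha : (k:ℤ) ≤ (α:ℤ) := by exact_mod_cast ha
  have Hb : (k:ℤ) ≤ (β:ℤ) := by exact_mod_cast hb
  have Hx : (k:ℤ) ≤ (ξ:ℤ) := by exact_mod_cast hx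
  have Hy : (k:ℤ) ≤ (η:ℤ) := by exact_mod_cast hy
  simp only [Ha, Hb, Hx, Hy, true_and, and_true, if_true]
  ring_nf
  by_cases hS : (k:ℤ) ≤ (ξ:ℤ) + (η:ℤ) - m * 3 + (α:ℤ) + (β:ℤ)
  case neg =>
    have h0 : ∀ C : ℂ, sgl k ((ξ:ℤ) + (η:ℤ) - m * 3 + (α:ℤ) + (β:ℤ)) C = 0 := fun C => dif_neg hS
    simp [h0]
  case pos =>
  simp only [ite_sgl, sgl_neg, sgl_sub, sgl_add]
  congr 1
  by_cases hm0 : 0 ≤ m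
  case neg =>
    -- m < 0 : every condition holds
    have hw : cc m ((-m + (α:ℤ) + (β:ℤ)).toNat) ≠ 0 := cc_ne_zero_of_neg (by omega) _
    have A1 : (k:ℤ) ≤ (ξ:ℤ) + (η:ℤ) - m := by omega
    have A2 : (k:ℤ) ≤ (ξ:ℤ) + (η:ℤ) - m * 2 + (α:ℤ) := by omega
    have A3 : (k:ℤ) ≤ (ξ:ℤ) - m + (α:ℤ) := by omega
    have A4 : (k:ℤ) ≤ (η:ℤ) - m + (α:ℤ) := by omega
    have A5 : (k:ℤ) ≤ (ξ:ℤ) - m + (β:ℤ) := by omega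
    have A6 : (k:ℤ) ≤ (ξ:ℤ) + (η:ℤ) - m * 2 + (β:ℤ) := by omega
    have A7 : (k:ℤ) ≤ (ξ:ℤ) - m * 2 + (α:ℤ) + (β:ℤ) := by omega
    have A8 : (k:ℤ) ≤ (η:ℤ) - m + (β:ℤ) := by omega
    have A9 : (k:ℤ) ≤ (η:ℤ) - m * 2 + (α:ℤ) + (β:ℤ) := by omega
    have A10 : (k:ℤ) ≤ -m + (α:ℤ) + (β:ℤ) := by omega
    simp only [A1, A2, A3, A4, A5, A6, A7, A8, A9, A10, hw, ne_eq, not_false_eq_true,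
      and_self, if_true, true_and, and_true]
    field_simp
    ring
  case pos =>
  by_cases hca : cc m α = 0
  · simp [hca]
  by_cases hcb : cc m β = 0
  · simp [hcb]
  have ham : m ≤ (α:ℤ) := by
    by_contra h
    exact hca ((cc_eq_zero_iff hm0 α).mpr (by omega))
  have hbm : m ≤ (β:ℤ) := by
    by_contra h
    exact hcb ((cc_eq_zero_iff hm0 β).mpr (by omega))
  have hw : cc m ((-m + (α:ℤ) + (β:ℤ)).toNat) ≠ 0 := by
    intro hcon
    rw [cc_eq_zero_iff hm0] at hcon
    omega
  have A3 : (k:ℤ) ≤ (ξ:ℤ) - m + (α:ℤ) := by omega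
  have A4 : (k:ℤ) ≤ (η:ℤ) - m + (α:ℤ) := by omega
  have A5 : (k:ℤ) ≤ (ξ:ℤ) - m + (β:ℤ) := by omega
  have A7 : (k:ℤ) ≤ (ξ:ℤ) - m * 2 + (α:ℤ) + (β:ℤ) := by omega
  have A8 : (k:ℤ) ≤ (η:ℤ) - m + (β:ℤ) := by omega
  have A9 : (k:ℤ) ≤ (η:ℤ) - m * 2 + (α:ℤ) + (β:ℤ) := by omega
  have A10 : (k:ℤ) ≤ -m + (α:ℤ) + (β:ℤ) := by omega
  simp only [A3, A4, A5, A7, A8, A9, A10, hw, ne_eq, not_false_eq_true,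
    and_self, if_true, true_and, and_true]
  by_cases hP1 : (k:ℤ) ≤ (ξ:ℤ) + (η:ℤ) - m
  · have B1 : (k:ℤ) ≤ (ξ:ℤ) + (η:ℤ) - m * 2 + (α:ℤ) := by omega
    have B2 : (k:ℤ) ≤ (ξ:ℤ) + (η:ℤ) - m * 2 + (β:ℤ) := by omega
    simp only [hP1, B1, B2, if_true]
    field_simp
    ring
  · have hcx : cc m ξ = 0 := (cc_eq_zero_iff hm0 ξ).mpr (by omega)
    simp only [hP1, if_false, hcx, mul_zero, zero_mul]
    by_cases hQ1 : (k:ℤ) ≤ (ξ:ℤ) + (η:ℤ) - m * 2 + (α:ℤ)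
    · by_cases hQ2 : (k:ℤ) ≤ (ξ:ℤ) + (η:ℤ) - m * 2 + (β:ℤ)
      · simp only [hQ1, hQ2, if_true]
        field_simp
        try ring
      · have hc4 : cc m ((ξ:ℤ) - m + (β:ℤ)).toNat = 0 := by
          rw [cc_eq_zero_iff hm0]; omega
        simp only [hQ1, hQ2, if_true, if_false, hc4, mul_zero, zero_mul]
        field_simp
        try ring
    · have hc2 : cc m ((ξ:ℤ) - m + (α:ℤ)).toNat = 0 := by
        rw [cc_eq_zero_iff hm0]; omega
      simp only [hQ1, if_false, hc2, mul_zero, zero_mul]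
      by_cases hQ2 : (k:ℤ) ≤ (ξ:ℤ) + (η:ℤ) - m * 2 + (β:ℤ)
      · simp only [hQ2, if_true]
        field_simp
        try ring
      · have hc4 : cc m ((ξ:ℤ) - m + (β:ℤ)).toNat = 0 := by
          rw [cc_eq_zero_iff hm0]; omega
        simp only [hQ2, if_false, hc4, mul_zero, zero_mul]
        field_simp
        try ring

/-- `IDD(K^k_∞, m, 0)` (whose product is `e_i ⋄ e_j = c_m(i)·e_{i+j−m}` when `i+j−m ≥ k`
and `0` otherwise, i.e. `dmul k ⊤ m 0`) is a conservative algebra with respect to the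
multiplication `*` above. -/
theorem stmt7 (k : ℕ) (m : ℤ) (a b x y : IDD k ⊤) :
    dmul k ⊤ m 0 b (dmul k ⊤ m 0 a (dmul k ⊤ m 0 x y))
      - dmul k ⊤ m 0 b (dmul k ⊤ m 0 (dmul k ⊤ m 0 a x) y)
      - dmul k ⊤ m 0 b (dmul k ⊤ m 0 x (dmul k ⊤ m 0 a y))
      - dmul k ⊤ m 0 a (dmul k ⊤ m 0 (dmul k ⊤ m 0 b x) y)
      + dmul k ⊤ m 0 (dmul k ⊤ m 0 a (dmul k ⊤ m 0 b x)) y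
      + dmul k ⊤ m 0 (dmul k ⊤ m 0 b x) (dmul k ⊤ m 0 a y)
      - dmul k ⊤ m 0 a (dmul k ⊤ m 0 x (dmul k ⊤ m 0 b y))
      + dmul k ⊤ m 0 (dmul k ⊤ m 0 a x) (dmul k ⊤ m 0 b y)
      + dmul k ⊤ m 0 x (dmul k ⊤ m 0 a (dmul k ⊤ m 0 b y))
    = - dmul k ⊤ m 0 (smul2 k m a b) (dmul k ⊤ m 0 x y)
      + dmul k ⊤ m 0 (dmul k ⊤ m 0 (smul2 k m a b) x) y
      + dmul k ⊤ m 0 x (dmul k ⊤ m 0 (smul2 k m a b) y) := by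
  induction a using Finsupp.induction_linear with
  | zero =>
    simp [dmul_zero_left, dmul_zero_right, smul2_zero_left, smul2_zero_right]
  | add f g hf hg =>
    simp only [dmul_add_left, dmul_add_right, smul2_add_left, smul2_add_right]
    linear_combination (norm := module) hf + hg
  | single pa ca =>
    induction b using Finsupp.induction_linear with
    | zero =>
      simp [dmul_zero_left, dmul_zero_right, smul2_zero_left, smul2_zero_right]
    | add f g hf hg =>
      simp only [dmul_add_left, dmul_add_right, smul2_add_left, smul2_add_right]
      linear_combination (norm := module) hf + hg
    | single pb cb =>
      induction x using Finsupp.induction_linear with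
      | zero =>
        simp [dmul_zero_left, dmul_zero_right, smul2_zero_left, smul2_zero_right]
      | add f g hf hg =>
        simp only [dmul_add_left, dmul_add_right, smul2_add_left, smul2_add_right]
        linear_combination (norm := module) hf + hg
      | single px cx =>
        induction y using Finsupp.induction_linear with
        | zero =>
          simp [dmul_zero_left, dmul_zero_right, smul2_zero_left, smul2_zero_right]
        | add f g hf hg =>
          simp only [dmul_add_left, dmul_add_right, smul2_add_left, smul2_add_right]
          linear_combination (norm := module) hf + hg
        | single py cy =>
          exact stmt7_single k m pa.1 pb.1 px.1 py.1 pa.2.1 pb.2.1 px.2.1 py.2.1 ca cb cx cy
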